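/- Let T ≥ 1, let φ_t ∈ ℝ^d and η_t ∈ ℝ^{d'} for t ∈ {1,…,T}, and let M* ∈ ℝ^{d×d'}. Define A_t = I + ∑_{s<t} φ_s φ_sᵀ, M_t = A_t^{-1} ∑_{s<t} φ_s (M*ᵀ φ_s + η_s)ᵀ, w̃_t² = φ_tᵀ A_t^{-1} φ_t, and Z_t = tr[(M* − M_t)ᵀ A_t (M* − M_t)]. Then for every t ∈ {1,…,T}, Z_t ≤ ‖M*‖_F² + 2 ∑_{s<t} φ_sᵀ (M_s − M*) η_s / (1 + w̃_s²) + ∑_{s<t} ‖η_s‖₂² · w̃_s² / (1 + w̃_s²). -/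

import Mathlib

open Matrix Finset

section Aux
variable {d d' n : ℕ}

lemma vmv_conjT (a : Fin d → ℝ) : (vecMulVec a a)ᴴ = vecMulVec a a := by
  ext i j; simp [conjTranspose_apply, vecMulVec_apply, mul_comm]

lemma vmv_transpose (a : Fin d → ℝ) (b : Fin d' → ℝ) :
    (vecMulVec a b)ᵀ = vecMulVec b a := by
  ext i j; simp [transpose_apply, vecMulVec_apply, mul_comm]

lemma mul_vmv (X : Matrix (Fin n) (Fin d) ℝ) (a : Fin d → ℝ) (b : Fin d' → ℝ) :
    X * vecMulVec a b = vecMulVec (X *ᵥ a) b := by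
  ext i j; simp [mul_apply, vecMulVec_apply, mulVec, dotProduct, Finset.sum_mul, mul_assoc]

lemma vmv_mul (a : Fin d → ℝ) (b : Fin d' → ℝ) (X : Matrix (Fin d') (Fin n) ℝ) :
    vecMulVec a b * X = vecMulVec a (b ᵥ* X) := by
  ext i j; simp [mul_apply, vecMulVec_apply, vecMul, dotProduct, Finset.mul_sum, mul_assoc]

lemma vmv_mulVec (a : Fin d → ℝ) (b x : Fin d' → ℝ) :
    vecMulVec a b *ᵥ x = (b ⬝ᵥ x) • a := by
  ext i
  simp only [mulVec, vecMulVec_apply, dotProduct, Pi.smul_apply, smul_eq_mul, Finset.sum_mul]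
  exact Finset.sum_congr rfl fun j _ => by ring

lemma vecMul_vmv (x a : Fin d → ℝ) (b : Fin d' → ℝ) :
    x ᵥ* vecMulVec a b = (x ⬝ᵥ a) • b := by
  ext j
  simp only [vecMul, vecMulVec_apply, dotProduct, Pi.smul_apply, smul_eq_mul, Finset.sum_mul]
  exact Finset.sum_congr rfl fun i _ => by ring

lemma vmv_smul_right (a : Fin d → ℝ) (r : ℝ) (b : Fin d' → ℝ) :
    vecMulVec a (r • b) = r • vecMulVec a b := by
  ext i j; simp [vecMulVec_apply, mul_comm, mul_assoc, mul_left_comm]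

lemma vmv_add_right (a : Fin d → ℝ) (b c : Fin d' → ℝ) :
    vecMulVec a (b + c) = vecMulVec a b + vecMulVec a c := by
  ext i j; simp [vecMulVec_apply, mul_add]

lemma trace_vmv (a b : Fin d → ℝ) : (vecMulVec a b).trace = a ⬝ᵥ b := by
  simp [Matrix.trace, Matrix.diag, vecMulVec_apply, dotProduct]

lemma sum_mulVec' {ι : Type*} (S : Finset ι) (f : ι → Matrix (Fin d) (Fin d) ℝ) (x : Fin d → ℝ) :
    (∑ s ∈ S, f s) *ᵥ x = ∑ s ∈ S, f s *ᵥ x := by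
  ext i
  simp only [mulVec, dotProduct, Matrix.sum_apply, Finset.sum_apply, Finset.sum_mul]
  exact Finset.sum_comm

lemma dotProduct_sum' {ι : Type*} (S : Finset ι) (x : Fin d → ℝ) (f : ι → Fin d → ℝ) :
    x ⬝ᵥ (∑ s ∈ S, f s) = ∑ s ∈ S, x ⬝ᵥ f s := by
  simp only [dotProduct, Finset.sum_apply, Finset.mul_sum]
  exact Finset.sum_comm

lemma psd_vmv (a : Fin d → ℝ) : (vecMulVec a a).PosSemidef := by
  refine Matrix.PosSemidef.of_dotProduct_mulVec_nonneg (vmv_conjT a) fun x => ?_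
  rw [vmv_mulVec, dotProduct_smul]
  have h : star x ⬝ᵥ a = a ⬝ᵥ x := by simp [dotProduct, mul_comm]
  rw [smul_eq_mul, h]
  exact mul_self_nonneg _

lemma herm_transpose {M : Matrix (Fin d) (Fin d) ℝ} (h : M.IsHermitian) : Mᵀ = M := by
  ext i j
  conv_rhs => rw [← h]
  simp [conjTranspose_apply]

lemma posDef_A (φ : ℕ → Fin d → ℝ) (t : ℕ) :
    (1 + ∑ s ∈ Finset.Ico 1 t, vecMulVec (φ s) (φ s)).PosDef := by
  apply Matrix.PosDef.add_posSemidef Matrix.PosDef.one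
  refine Matrix.PosSemidef.of_dotProduct_mulVec_nonneg ?_ ?_
  · show _ = _
    rw [conjTranspose_sum]
    exact Finset.sum_congr rfl fun s _ => vmv_conjT _
  · intro x
    rw [sum_mulVec', dotProduct_sum']
    exact Finset.sum_nonneg fun s _ => (psd_vmv (φ s)).dotProduct_mulVec_nonneg x

lemma ridge_step (φt : Fin d → ℝ) (ηt : Fin d' → ℝ)
    (At Ap : Matrix (Fin d) (Fin d) ℝ) (hAt : At.PosDef)
    (hAp : Ap = At + vecMulVec φt φt)
    (E Ep : Matrix (Fin d) (Fin d') ℝ)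
    (hD : Ap * Ep = At * E - vecMulVec φt ηt)
    (wt : ℝ) (hwt : wt = φt ⬝ᵥ (At⁻¹ *ᵥ φt)) :
    (Epᵀ * Ap * Ep).trace ≤ (Eᵀ * At * E).trace
      + 2 * (φt ⬝ᵥ ((-E) *ᵥ ηt)) / (1 + wt)
      + (∑ j, (ηt j) ^ 2) * wt / (1 + wt) := by
  have hdet : IsUnit At.det := hAt.det_pos.ne'.isUnit
  set B := At⁻¹ with hBdef
  have hB1 : At * B = 1 := Matrix.mul_nonsing_inv _ hdet
  have hB2 : B * At = 1 := Matrix.nonsing_inv_mul _ hdet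
  have hAtT : Atᵀ = At := herm_transpose hAt.isHermitian
  have hBT : Bᵀ = B := by rw [hBdef, Matrix.transpose_nonsing_inv, hAtT]
  set u := B *ᵥ φt with hu
  have hw0 : 0 ≤ wt := by
    have h := hAt.inv.posSemidef.dotProduct_mulVec_nonneg φt
    rw [hwt]; simpa using h
  have hcpos : (0:ℝ) < 1 + wt := by linarith
  have hcne : (1:ℝ) + wt ≠ 0 := ne_of_gt hcpos
  have hup : At *ᵥ u = φt := by
    rw [hu, Matrix.mulVec_mulVec, hB1, Matrix.one_mulVec]
  have hvecB : φt ᵥ* B = u := by rw [← hBT, Matrix.vecMul_transpose]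
  have hdotu : φt ⬝ᵥ u = wt := hwt.symm
  have h1 : At * vecMulVec u u = vecMulVec φt u := by rw [mul_vmv, hup]
  have h2 : vecMulVec φt φt * B = vecMulVec φt u := by rw [vmv_mul, hvecB]
  have h3 : vecMulVec φt φt * vecMulVec u u = wt • vecMulVec φt u := by
    rw [vmv_mul, vecMul_vmv, hdotu, vmv_smul_right]
  have hNinv : Ap⁻¹ = B - (1 + wt)⁻¹ • vecMulVec u u := by
    apply Matrix.inv_eq_right_inv
    rw [hAp, Matrix.add_mul, Matrix.mul_sub, Matrix.mul_sub, hB1,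
      Matrix.mul_smul, Matrix.mul_smul, h1, h2, h3, smul_smul]
    have hco : (1 + wt)⁻¹ * wt = 1 - (1 + wt)⁻¹ := by
      field_simp
      ring
    rw [hco, sub_smul, one_smul]
    abel
  have hApd : Ap.PosDef := by rw [hAp]; exact hAt.add_posSemidef (psd_vmv φt)
  have hdetp : IsUnit Ap.det := hApd.det_pos.ne'.isUnit
  have hApT : Apᵀ = Ap := herm_transpose hApd.isHermitian
  have hApinvT : (Ap⁻¹)ᵀ = Ap⁻¹ := by rw [Matrix.transpose_nonsing_inv, hApT]
  set D := At * E with hDdef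
  set G := vecMulVec φt ηt with hGdef
  have hEp : Ep = Ap⁻¹ * (D - G) := by
    rw [← hD, Matrix.nonsing_inv_mul_cancel_left _ _ hdetp]
  have hZp : (Epᵀ * Ap * Ep).trace = ((D - G)ᵀ * Ap⁻¹ * (D - G)).trace := by
    rw [Matrix.mul_assoc, hEp, Matrix.mul_nonsing_inv_cancel_left _ _ hdetp,
      Matrix.transpose_mul, hApinvT, Matrix.mul_assoc]
  set v := φt ᵥ* E with hv
  have huAt : u ᵥ* At = φt := by rw [← Matrix.mulVec_transpose, hAtT, hup]
  have hvD : u ᵥ* D = v := by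
    rw [hDdef, ← Matrix.vecMul_vecMul, huAt, hv]
  have huDT : ∀ X : Matrix (Fin d) (Fin d') ℝ, Xᵀ *ᵥ u = u ᵥ* X :=
    fun X => Matrix.mulVec_transpose X u
  have hBφ : ∀ X : Matrix (Fin d') (Fin d) ℝ, (X * B) *ᵥ φt = X *ᵥ u := by
    intro X; rw [← Matrix.mulVec_mulVec, ← hu]
  -- trace of middle vecMulVec term
  have hg : u ᵥ* (D - G) = v - wt • ηt := by
    rw [Matrix.vecMul_sub, hvD, hGdef, vecMul_vmv, dotProduct_comm, hdotu]
  have ht2 : ((D - G)ᵀ * vecMulVec u u * (D - G)).trace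
      = (v - wt • ηt) ⬝ᵥ (v - wt • ηt) := by
    rw [mul_vmv, vmv_mul, trace_vmv, huDT, hg]
  -- the four terms
  have hT0 : (Dᵀ * B * D).trace = (Eᵀ * At * E).trace := by
    have hB' : B * (At * E) = E := by rw [← Matrix.mul_assoc, hB2, Matrix.one_mul]
    rw [hDdef, Matrix.transpose_mul, hAtT]
    rw [Matrix.mul_assoc, Matrix.mul_assoc, hB', ← Matrix.mul_assoc]
  have hT1 : (Dᵀ * B * G).trace = v ⬝ᵥ ηt := by
    rw [hGdef, mul_vmv, trace_vmv, hBφ, huDT, hvD]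
  have hT2 : (Gᵀ * B * D).trace = v ⬝ᵥ ηt := by
    rw [hGdef, vmv_transpose, vmv_mul, hvecB, vmv_mul, hvD, trace_vmv, dotProduct_comm]
  have hT3 : (Gᵀ * B * G).trace = wt * (ηt ⬝ᵥ ηt) := by
    rw [hGdef, vmv_transpose, vmv_mul, hvecB, vmv_mul, vecMul_vmv, dotProduct_comm, hdotu,
      vmv_smul_right, trace_smul, trace_vmv, smul_eq_mul]
  have hexp : ((D - G)ᵀ * Ap⁻¹ * (D - G)).trace
      = (Eᵀ * At * E).trace - 2 * (v ⬝ᵥ ηt) + wt * (ηt ⬝ᵥ ηt)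
        - (1 + wt)⁻¹ * ((v - wt • ηt) ⬝ᵥ (v - wt • ηt)) := by
    rw [hNinv, Matrix.mul_sub ((D - G)ᵀ) B ((1 + wt)⁻¹ • vecMulVec u u),
      Matrix.mul_smul, Matrix.sub_mul, Matrix.smul_mul,
      Matrix.trace_sub, Matrix.trace_smul, ht2, smul_eq_mul]
    have hBexp : ((D - G)ᵀ * B * (D - G)).trace
        = (Eᵀ * At * E).trace - 2 * (v ⬝ᵥ ηt) + wt * (ηt ⬝ᵥ ηt) := by
      simp only [Matrix.transpose_sub, Matrix.sub_mul, Matrix.mul_sub, Matrix.trace_sub]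
      rw [hT0, hT1, hT2, hT3]
      ring
    rw [hBexp]
  -- final arithmetic
  have hQ : 0 ≤ (v - wt • ηt) ⬝ᵥ (v - wt • ηt) :=
    Finset.sum_nonneg fun i _ => mul_self_nonneg _
  have hP : φt ⬝ᵥ ((-E) *ᵥ ηt) = -(v ⬝ᵥ ηt) := by
    rw [Matrix.dotProduct_mulVec, Matrix.vecMul_neg, hv, neg_dotProduct]
  have hgg : (v - wt • ηt) ⬝ᵥ (v - wt • ηt)
      = v ⬝ᵥ v - 2 * wt * (v ⬝ᵥ ηt) + wt ^ 2 * (ηt ⬝ᵥ ηt) := by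
    simp only [sub_dotProduct, dotProduct_sub, smul_dotProduct,
      dotProduct_smul, smul_eq_mul, dotProduct_comm ηt v]
    ring
  have hR : (∑ j, (ηt j) ^ 2) = ηt ⬝ᵥ ηt := by
    simp [dotProduct, sq]
  rw [hZp, hexp, hP, hR, hgg]
  have hQ' : 0 ≤ (v ⬝ᵥ v) := Finset.sum_nonneg fun i _ => mul_self_nonneg _
  have key : (Eᵀ * At * E).trace - 2 * (v ⬝ᵥ ηt) + wt * (ηt ⬝ᵥ ηt)
      - (1 + wt)⁻¹ * (v ⬝ᵥ v - 2 * wt * (v ⬝ᵥ ηt) + wt ^ 2 * (ηt ⬝ᵥ ηt))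
      = (Eᵀ * At * E).trace + 2 * (-(v ⬝ᵥ ηt)) / (1 + wt) + (ηt ⬝ᵥ ηt) * wt / (1 + wt)
        - (v ⬝ᵥ v) / (1 + wt) := by
    field_simp
    ring
  rw [key]
  have := div_nonneg hQ' hcpos.le
  linarith

end Aux

/-- Lemma 8: growth bound for the weighted ridge-regression estimation error
`Z_t = tr[(M* − M_t)ᵀ A_t (M* − M_t)]`, where `A_t = I + ∑_{s<t} φ_s φ_sᵀ`,
`M_t = A_t⁻¹ ∑_{s<t} φ_s (M*ᵀφ_s + η_s)ᵀ` and `w̃_t² = φ_tᵀ A_t⁻¹ φ_t`. -/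
theorem ridge_error_growth_bound {d d' : ℕ} (T : ℕ) (hT : 1 ≤ T)
    (φ : ℕ → Fin d → ℝ) (η : ℕ → Fin d' → ℝ)
    (Mstar : Matrix (Fin d) (Fin d') ℝ)
    (A : ℕ → Matrix (Fin d) (Fin d) ℝ)
    (hA : ∀ t, A t = 1 + ∑ s ∈ Finset.Ico 1 t, vecMulVec (φ s) (φ s))
    (M : ℕ → Matrix (Fin d) (Fin d') ℝ)
    (hM : ∀ t, M t = (A t)⁻¹ *
      ∑ s ∈ Finset.Ico 1 t, vecMulVec (φ s) (Mstarᵀ *ᵥ φ s + η s))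
    (w : ℕ → ℝ) (hw : ∀ t, w t = φ t ⬝ᵥ ((A t)⁻¹ *ᵥ φ t))
    (Z : ℕ → ℝ)
    (hZ : ∀ t, Z t = ((Mstar - M t)ᵀ * A t * (Mstar - M t)).trace) :
    ∀ t ∈ Finset.Icc 1 T,
      Z t ≤ (∑ i, ∑ j, (Mstar i j) ^ 2) +
        2 * ∑ s ∈ Finset.Ico 1 t, (φ s ⬝ᵥ ((M s - Mstar) *ᵥ η s)) / (1 + w s) +
        ∑ s ∈ Finset.Ico 1 t, (∑ j, (η s j) ^ 2) * w s / (1 + w s) := by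
  have hpd : ∀ s, (A s).PosDef := fun s => by rw [hA s]; exact posDef_A φ s
  have hdet : ∀ s, IsUnit (A s).det := fun s => (hpd s).det_pos.ne'.isUnit
  have hbal : ∀ s, A s * M s
      = ∑ r ∈ Finset.Ico 1 s, vecMulVec (φ r) (Mstarᵀ *ᵥ φ r + η r) := fun s => by
    rw [hM s, Matrix.mul_nonsing_inv_cancel_left _ _ (hdet s)]
  have key : ∀ t, 1 ≤ t → Z t ≤ (∑ i, ∑ j, (Mstar i j) ^ 2) +
        2 * ∑ s ∈ Finset.Ico 1 t, (φ s ⬝ᵥ ((M s - Mstar) *ᵥ η s)) / (1 + w s) +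
        ∑ s ∈ Finset.Ico 1 t, (∑ j, (η s j) ^ 2) * w s / (1 + w s) := by
    intro t ht
    induction t, ht using Nat.le_induction with
    | base =>
      have hA1 : A 1 = 1 := by rw [hA 1]; simp
      have hM1 : M 1 = 0 := by rw [hM 1]; simp
      have hZ1 : Z 1 = ∑ i, ∑ j, (Mstar i j) ^ 2 := by
        rw [hZ 1, hA1, hM1, sub_zero, Matrix.mul_one]
        simp only [Matrix.trace, Matrix.diag, Matrix.mul_apply, Matrix.transpose_apply]
        rw [Finset.sum_comm]
        exact Finset.sum_congr rfl fun i _ => Finset.sum_congr rfl fun j _ => (sq _).symm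
      simp [hZ1]
    | succ t ht IH =>
      have hApdef : A (t + 1) = A t + vecMulVec (φ t) (φ t) := by
        rw [hA (t + 1), hA t, Finset.sum_Ico_succ_top ht, add_assoc]
      have hφM : φ t ᵥ* Mstar = Mstarᵀ *ᵥ φ t := (Matrix.mulVec_transpose Mstar (φ t)).symm
      have hD : A (t + 1) * (Mstar - M (t + 1))
          = A t * (Mstar - M t) - vecMulVec (φ t) (η t) := by
        rw [Matrix.mul_sub, Matrix.mul_sub, hbal (t + 1), hbal t, hApdef,
          Finset.sum_Ico_succ_top ht, Matrix.add_mul, vmv_mul, hφM, vmv_add_right]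
        abel
      have hstep := ridge_step (φ t) (η t) (A t) (A (t + 1)) (hpd t) hApdef
        (Mstar - M t) (Mstar - M (t + 1)) hD (w t) (hw t)
      rw [← hZ t, ← hZ (t + 1), neg_sub] at hstep
      rw [Finset.sum_Ico_succ_top ht, Finset.sum_Ico_succ_top ht]
      have h2 : 2 * (φ t ⬝ᵥ ((M t - Mstar) *ᵥ η t)) / (1 + w t)
          = 2 * ((φ t ⬝ᵥ ((M t - Mstar) *ᵥ η t)) / (1 + w t)) := by ring
      rw [h2] at hstep
      linarith [hstep, IH]
  intro t htIcc
  exact key t (Finset.mem_Icc.mp htIcc).1
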